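/- arXiv:1204.3807 — 3 statements merged into one kernel-verified Lean document; each statement's English description precedes it below -/
import Mathlib

section
/- Let δ > 0, s₀ ∈ ℂ with s₀ ≠ 0, and let f : [0,∞) → ℂ be continuously differentiable with |f(ξ)| ≤ C e^{−δξ} and |f′(ξ)| ≤ C e^{−δξ} for all ξ ≥ 0 and some constant C. For z in the open unit disc with z ≠ 1 and Re(s₀(z+1)/(z−1)) > −δ, define (𝓜𝓛f)(z) = (Lf)(s₀(z+1)/(z−1))/(z−1), where (Lg)(s) = ∫₀^∞ e^{−sξ} g(ξ) dξ, and define F(z) = (2s₀·(𝓜𝓛f)(z) − f(0))/(z−1), so that (𝓜𝓛f)(z) = (1/(2s₀))·(f(0) + (z−1)F(z)). Then (𝓜𝓛(f′))(z) = (1/2)·(f(0) + (z+1)·F(z)) for all such z. -/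
open Complex MeasureTheory Set

private lemma laplace_of_derivWithin
    (δ : ℝ) (hδ : 0 < δ) (f : ℝ → ℂ) (C : ℝ)
    (hf : ContDiffOn ℝ 1 f (Ici 0))
    (hbf : ∀ ξ : ℝ, 0 ≤ ξ → ‖f ξ‖ ≤ C * Real.exp (-δ * ξ))
    (hbf' : ∀ ξ : ℝ, 0 ≤ ξ → ‖derivWithin f (Ici 0) ξ‖ ≤ C * Real.exp (-δ * ξ))
    (s : ℂ) (hs : -δ < s.re) :
    ∫ ξ in Ioi (0 : ℝ), Complex.exp (-s * ξ) * derivWithin f (Ici 0) ξ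
      = s * (∫ ξ in Ioi (0 : ℝ), Complex.exp (-s * ξ) * f ξ) - f 0 := by
  set b : ℝ := s.re + δ with hb_def
  have hb : 0 < b := by simp [hb_def]; linarith
  set u : ℝ → ℂ := fun ξ => Complex.exp (-s * ξ) with hu_def
  set u' : ℝ → ℂ := fun ξ => -s * Complex.exp (-s * ξ) with hu'_def
  have hnormu : ∀ ξ : ℝ, ‖u ξ‖ = Real.exp (-s.re * ξ) := by
    intro ξ
    simp [hu_def, Complex.norm_exp]
  have hu_cont : Continuous u :=
    Complex.continuous_exp.comp (continuous_const.mul Complex.continuous_ofReal)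
  -- generic integrability
  have hint : ∀ g : ℝ → ℂ, ContinuousOn g (Ici 0) →
      (∀ ξ : ℝ, 0 ≤ ξ → ‖g ξ‖ ≤ C * Real.exp (-δ * ξ)) →
      IntegrableOn (fun ξ => u ξ * g ξ) (Ioi (0:ℝ)) := by
    intro g hgc hgb
    have hmeas : AEStronglyMeasurable (fun ξ => u ξ * g ξ)
        (volume.restrict (Ioi (0:ℝ))) := by
      apply ContinuousOn.aestronglyMeasurable _ measurableSet_Ioi
      exact (hu_cont.continuousOn.mul (hgc.mono Ioi_subset_Ici_self))
    have hdom : IntegrableOn (fun ξ:ℝ => C * Real.exp (-b * ξ)) (Ioi (0:ℝ)) :=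
      (exp_neg_integrableOn_Ioi 0 hb).const_mul C
    refine hdom.integrable.mono' hmeas ?_
    filter_upwards [ae_restrict_mem measurableSet_Ioi] with ξ hξ
    have hξ0 : (0:ℝ) ≤ ξ := le_of_lt hξ
    have : ‖u ξ * g ξ‖ ≤ Real.exp (-s.re * ξ) * (C * Real.exp (-δ * ξ)) := by
      rw [norm_mul, hnormu]
      exact mul_le_mul_of_nonneg_left (hgb ξ hξ0) (Real.exp_pos _).le
    refine this.trans (le_of_eq ?_)
    rw [mul_left_comm, ← Real.exp_add]
    congr 2
    rw [hb_def]; ring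
  have hu : ∀ x ∈ Ioi (0:ℝ), HasDerivAt u (u' x) x := by
    intro x _
    have h1 : HasDerivAt (fun z : ℂ => Complex.exp (-s * z))
        (-s * Complex.exp (-s * (x:ℂ))) (x:ℂ) := by
      simpa [mul_comm] using ((hasDerivAt_id ((x:ℂ))).const_mul (-s)).cexp
    exact h1.comp_ofReal
  have hv : ∀ x ∈ Ioi (0:ℝ), HasDerivAt f (derivWithin f (Ici 0) x) x := by
    intro x hx
    exact ((hf.differentiableOn one_ne_zero) x (mem_Ici.mpr (le_of_lt hx))).hasDerivWithinAt.hasDerivAt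
      (Ici_mem_nhds hx)
  have hfc : ContinuousOn f (Ici 0) := hf.continuousOn
  have hf'c : ContinuousOn (derivWithin f (Ici 0)) (Ici 0) :=
    hf.continuousOn_derivWithin (uniqueDiffOn_Ici 0) le_rfl
  have huv' : IntegrableOn (u * derivWithin f (Ici 0)) (Ioi (0:ℝ)) :=
    hint _ hf'c hbf'
  have hu'v : IntegrableOn (u' * f) (Ioi (0:ℝ)) := by
    refine (((hint _ hfc hbf).const_mul (-s)).congr
      (Filter.Eventually.of_forall fun ξ => ?_))
    show -s * (u ξ * f ξ) = (u' * f) ξ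
    simp only [Pi.mul_apply, hu'_def, hu_def]
    ring
  have h_zero : Filter.Tendsto (u * f) (nhdsWithin 0 (Ioi (0:ℝ))) (nhds (f 0)) := by
    have h1 : Filter.Tendsto u (nhdsWithin 0 (Ioi (0:ℝ))) (nhds 1) := by
      have := (hu_cont.tendsto 0).mono_left
        (nhdsWithin_le_nhds (s := Ioi (0:ℝ)))
      simpa [hu_def] using this
    have h2 : Filter.Tendsto f (nhdsWithin 0 (Ioi (0:ℝ))) (nhds (f 0)) :=
      (hfc 0 self_mem_Ici).mono_left (nhdsWithin_mono _ Ioi_subset_Ici_self)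
    have h3 := h1.mul h2; rw [one_mul] at h3; exact h3
  have h_infty : Filter.Tendsto (u * f) Filter.atTop (nhds 0) := by
    apply squeeze_zero_norm' (a := fun ξ => C * Real.exp (-b * ξ))
    · filter_upwards [Filter.eventually_ge_atTop (0:ℝ)] with ξ hξ
      calc ‖(u * f) ξ‖ = Real.exp (-s.re * ξ) * ‖f ξ‖ := by
            rw [Pi.mul_apply, norm_mul, hnormu]
        _ ≤ Real.exp (-s.re * ξ) * (C * Real.exp (-δ * ξ)) :=
            mul_le_mul_of_nonneg_left (hbf ξ hξ) (Real.exp_pos _).le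
        _ = C * Real.exp (-b * ξ) := by
            rw [show Real.exp (-s.re * ξ) * (C * Real.exp (-δ * ξ))
                = C * (Real.exp (-s.re * ξ) * Real.exp (-δ * ξ)) by ring, ← Real.exp_add]
            congr 2
            rw [hb_def]; ring
    · have : Filter.Tendsto (fun ξ : ℝ => Real.exp (-b * ξ)) Filter.atTop (nhds 0) := by
        apply Real.tendsto_exp_atBot.comp
        exact Filter.tendsto_id.const_mul_atTop_of_neg (neg_lt_zero.mpr hb)
      simpa using this.const_mul C
  have key := integral_Ioi_mul_deriv_eq_deriv_mul hu hv huv' hu'v h_zero h_infty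
  rw [key]
  have : ∫ x in Ioi (0:ℝ), u' x * f x
      = -s * ∫ x in Ioi (0:ℝ), u x * f x := by
    rw [← MeasureTheory.integral_const_mul]
    apply setIntegral_congr_fun measurableSet_Ioi
    intro x _
    show u' x * f x = -s * (u x * f x)
    simp only [hu'_def, hu_def]
    ring
  rw [this]
  ring

/-- The operator `𝒯₊`: with `(𝓜𝓛f)(z) = (Lf)(s₀(z+1)/(z−1))/(z−1)` and
`F(z) = (2s₀(𝓜𝓛f)(z) − f(0))/(z−1)`, the Möbius-transformed Laplace transform of the
derivative satisfies `(𝓜𝓛f′)(z) = (1/2)(f(0) + (z+1)F(z))`. -/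
theorem moebius_laplace_of_derivative
    (δ : ℝ) (hδ : 0 < δ) (s₀ : ℂ) (hs₀ : s₀ ≠ 0) (f : ℝ → ℂ) (C : ℝ)
    (hf : ContDiffOn ℝ 1 f (Ici 0))
    (hbf : ∀ ξ : ℝ, 0 ≤ ξ → ‖f ξ‖ ≤ C * Real.exp (-δ * ξ))
    (hbf' : ∀ ξ : ℝ, 0 ≤ ξ → ‖derivWithin f (Ici 0) ξ‖ ≤ C * Real.exp (-δ * ξ)) :
    ∀ z : ℂ, ‖z‖ < 1 → z ≠ 1 → -δ < (s₀ * (z + 1) / (z - 1)).re →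
      (∫ ξ in Ioi (0 : ℝ),
          Complex.exp (-(s₀ * (z + 1) / (z - 1)) * ξ) * derivWithin f (Ici 0) ξ) / (z - 1) =
        (1 / 2) * (f 0 + (z + 1) *
          ((2 * s₀ *
            ((∫ ξ in Ioi (0 : ℝ),
                Complex.exp (-(s₀ * (z + 1) / (z - 1)) * ξ) * f ξ) / (z - 1)) - f 0)
            / (z - 1))) := by
  intro z hz hz1 hre
  have hz1' : z - 1 ≠ 0 := sub_ne_zero.mpr hz1
  set s : ℂ := s₀ * (z + 1) / (z - 1) with hs_def
  rw [laplace_of_derivWithin δ hδ f C hf hbf hbf' s hre]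
  set I : ℂ := ∫ ξ in Ioi (0 : ℝ), Complex.exp (-s * ξ) * f ξ with hI_def
  rw [hs_def]
  field_simp
  ring
end

section
/- Let δ > 0, s₀ ∈ ℂ with s₀ ≠ 0, and let f : [0,∞) → ℂ be continuous with |f(ξ)| ≤ C e^{−δξ} for all ξ ≥ 0 and some constant C. For z in the open unit disc with z ≠ 1 and Re(s₀(z+1)/(z−1)) > −δ, define (𝓜𝓛f)(z) = (Lf)(s₀(z+1)/(z−1))/(z−1), where (Lg)(s) = ∫₀^∞ e^{−sξ} g(ξ) dξ. Then the Möbius-transformed Laplace transform of the function ξ ↦ ξ·f(ξ) satisfies (𝓜𝓛(ξ·f(ξ)))(z) = s₀^{−1}·( ((z−1)²/2)·(𝓜𝓛f)′(z) + ((z−1)/2)·(𝓜𝓛f)(z) ) for all such z. -/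
open Complex MeasureTheory Set

private lemma integrableOn_xi_exp {a : ℝ} (ha : 0 < a) :
    IntegrableOn (fun x : ℝ => x * Real.exp (-a * x)) (Ioi 0) := by
  have h := integrableOn_rpow_mul_exp_neg_mul_rpow (p := 1) (s := 1) (b := a)
    (by norm_num) one_pos ha
  refine h.congr_fun (fun x hx => ?_) measurableSet_Ioi
  norm_num

private lemma laplace_hasDerivAt (δ : ℝ) (hδ : 0 < δ) (f : ℝ → ℂ) (C : ℝ)
    (hf : ContinuousOn f (Ici 0))
    (hbf : ∀ ξ : ℝ, 0 ≤ ξ → ‖f ξ‖ ≤ C * Real.exp (-δ * ξ))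
    (s : ℂ) (hs : -δ < s.re) :
    HasDerivAt (fun s : ℂ => ∫ ξ in Ioi (0 : ℝ), Complex.exp (-s * ξ) * f ξ)
      (∫ ξ in Ioi (0 : ℝ), -(ξ : ℂ) * (Complex.exp (-s * ξ) * f ξ)) s := by
  have hC : 0 ≤ C := by
    have h := hbf 0 le_rfl
    have h0 : (0:ℝ) ≤ ‖f 0‖ := norm_nonneg _
    simp at h; linarith
  set ε : ℝ := (s.re + δ) / 2 with hε
  have hε_pos : 0 < ε := by simp only [hε]; linarith
  have main := hasDerivAt_integral_of_dominated_loc_of_deriv_le (μ := volume.restrict (Ioi 0))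
    (F := fun (w : ℂ) (ξ : ℝ) => Complex.exp (-w * ξ) * f ξ)
    (F' := fun (w : ℂ) (ξ : ℝ) => -(ξ : ℂ) * (Complex.exp (-w * ξ) * f ξ))
    (x₀ := s) (bound := fun ξ : ℝ => C * (ξ * Real.exp (-ε * ξ))) (Metric.ball_mem_nhds s hε_pos)
    ?_ ?_ ?_ ?_ ?_ ?_
  · exact main.2
  · -- measurability of F near s
    refine Filter.Eventually.of_forall (fun w => ?_)
    exact (((Complex.continuous_exp.comp (continuous_const.mul
      Complex.continuous_ofReal)).continuousOn).mul
      (hf.mono Ioi_subset_Ici_self)).aestronglyMeasurable measurableSet_Ioi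
  · -- integrability of F s
    refine Integrable.mono' (g := fun ξ : ℝ => C * Real.exp (-(s.re + δ) * ξ))
      ((exp_neg_integrableOn_Ioi 0 (by linarith : (0:ℝ) < s.re + δ)).const_mul C)
      ((((Complex.continuous_exp.comp (continuous_const.mul
        Complex.continuous_ofReal)).continuousOn).mul
        (hf.mono Ioi_subset_Ici_self)).aestronglyMeasurable measurableSet_Ioi) ?_
    rw [ae_restrict_iff' measurableSet_Ioi]
    refine Filter.Eventually.of_forall (fun ξ hξ => ?_)
    have hre : (-s * (ξ:ℂ)).re = -s.re * ξ := by simp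
    calc ‖Complex.exp (-s * ξ) * f ξ‖
        = Real.exp (-s.re * ξ) * ‖f ξ‖ := by
          rw [norm_mul, Complex.norm_exp, hre]
      _ ≤ Real.exp (-s.re * ξ) * (C * Real.exp (-δ * ξ)) := by
          gcongr; exact hbf ξ (le_of_lt hξ)
      _ = C * Real.exp (-(s.re + δ) * ξ) := by
          rw [show -(s.re + δ) * ξ = -s.re * ξ + -δ * ξ by ring, Real.exp_add]; ring
  · -- measurability of F' s
    exact ((Complex.continuous_ofReal.neg.continuousOn).mul
      (((Complex.continuous_exp.comp (continuous_const.mul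
        Complex.continuous_ofReal)).continuousOn).mul
        (hf.mono Ioi_subset_Ici_self))).aestronglyMeasurable measurableSet_Ioi
  · -- uniform bound on F'
    rw [ae_restrict_iff' measurableSet_Ioi]
    refine Filter.Eventually.of_forall (fun ξ hξ w hw => ?_)
    have hξ0 : (0:ℝ) < ξ := hξ
    have hwre : s.re - ε ≤ w.re := by
      have h1 : |(w - s).re| ≤ ‖w - s‖ := Complex.abs_re_le_norm _
      have h2 : ‖w - s‖ < ε := by
        simpa [Complex.dist_eq] using Metric.mem_ball.mp hw
      have := (abs_le.mp (le_of_lt (lt_of_le_of_lt h1 h2))).1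
      simp only [Complex.sub_re] at this
      linarith
    have hre : (-w * (ξ:ℂ)).re = -w.re * ξ := by simp
    calc ‖-(ξ:ℂ) * (Complex.exp (-w * ξ) * f ξ)‖
        = ξ * (Real.exp (-w.re * ξ) * ‖f ξ‖) := by
          rw [norm_mul, norm_mul, norm_neg,
            Complex.norm_real, Real.norm_eq_abs, abs_of_pos hξ0,
            Complex.norm_exp, hre]
      _ ≤ ξ * (Real.exp (-w.re * ξ) * (C * Real.exp (-δ * ξ))) := by
          gcongr; exact hbf ξ (le_of_lt hξ0)
      _ = C * (ξ * Real.exp (-(w.re + δ) * ξ)) := by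
          rw [show -(w.re + δ) * ξ = -w.re * ξ + -δ * ξ by ring, Real.exp_add]; ring
      _ ≤ C * (ξ * Real.exp (-ε * ξ)) := by
          gcongr
          have : ε ≤ w.re + δ := by simp only [hε] at *; linarith
          nlinarith
  · -- integrability of bound
    exact (integrableOn_xi_exp hε_pos).const_mul C
  · -- differentiability in the parameter
    refine Filter.Eventually.of_forall (fun ξ w hw => ?_)
    have h1 : HasDerivAt (fun w : ℂ => -w * (ξ:ℂ)) (-(ξ:ℂ)) w := by
      simpa using (hasDerivAt_id w).neg.mul_const (ξ:ℂ)
    have h2 := (h1.cexp).mul_const (f ξ)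
    convert h2 using 1
    · rfl
    ring

/-- The operator `𝒫` realizing multiplication by the radial variable: for
`(𝓜𝓛f)(z) = (Lf)(s₀(z+1)/(z−1))/(z−1)` one has
`(𝓜𝓛(ξ·f(ξ)))(z) = s₀⁻¹ ((z−1)²/2 (𝓜𝓛f)′(z) + (z−1)/2 (𝓜𝓛f)(z))`. -/
theorem moebius_laplace_of_multiplication_by_xi
    (δ : ℝ) (hδ : 0 < δ) (s₀ : ℂ) (hs₀ : s₀ ≠ 0) (f : ℝ → ℂ) (C : ℝ)
    (hf : ContinuousOn f (Ici 0))
    (hbf : ∀ ξ : ℝ, 0 ≤ ξ → ‖f ξ‖ ≤ C * Real.exp (-δ * ξ))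
    (M : ℂ → ℂ)
    (hM : ∀ z : ℂ, M z =
      (∫ ξ in Ioi (0 : ℝ), Complex.exp (-(s₀ * (z + 1) / (z - 1)) * ξ) * f ξ) / (z - 1)) :
    ∀ z : ℂ, ‖z‖ < 1 → z ≠ 1 → -δ < (s₀ * (z + 1) / (z - 1)).re →
      (∫ ξ in Ioi (0 : ℝ),
          Complex.exp (-(s₀ * (z + 1) / (z - 1)) * ξ) * ((ξ : ℂ) * f ξ)) / (z - 1) =
        s₀⁻¹ * ((z - 1) ^ 2 / 2 * deriv M z + (z - 1) / 2 * M z) := by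
  intro z hz hz1 hre
  have hz1' : z - 1 ≠ 0 := sub_ne_zero.mpr hz1
  have hnum : HasDerivAt (fun w : ℂ => s₀ * (w + 1)) s₀ z := by
    simpa using ((hasDerivAt_id z).add_const (1:ℂ)).const_mul s₀
  have hden : HasDerivAt (fun w : ℂ => w - 1) 1 z := by
    simpa using (hasDerivAt_id z).sub_const (1:ℂ)
  have hσ : HasDerivAt (fun w : ℂ => s₀ * (w + 1) / (w - 1))
      ((s₀ * (z - 1) - s₀ * (z + 1) * 1) / (z - 1) ^ 2) z := hnum.div hden hz1'
  have hL := laplace_hasDerivAt δ hδ f C hf hbf (s₀ * (z + 1) / (z - 1)) hre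
  have hcomp := hL.comp z hσ
  have hMder : HasDerivAt M
      (((∫ ξ in Ioi (0:ℝ), -(ξ:ℂ) *
          (Complex.exp (-(s₀ * (z + 1) / (z - 1)) * ξ) * f ξ)) *
        ((s₀ * (z - 1) - s₀ * (z + 1) * 1) / (z - 1) ^ 2) * (z - 1) -
        (∫ ξ in Ioi (0:ℝ),
          Complex.exp (-(s₀ * (z + 1) / (z - 1)) * ξ) * f ξ) * 1) / (z - 1) ^ 2) z := by
    have h := hcomp.div hden hz1'
    have hMeq : M = fun w => ((fun s : ℂ =>
        ∫ ξ in Ioi (0:ℝ), Complex.exp (-s * ξ) * f ξ) ∘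
        fun w : ℂ => s₀ * (w + 1) / (w - 1)) w / (w - 1) :=
      funext fun w => by rw [hM w]; rfl
    rw [hMeq]
    exact h
  rw [hMder.deriv, hM z]
  have hJ : (∫ ξ in Ioi (0:ℝ), -(ξ:ℂ) *
      (Complex.exp (-(s₀ * (z + 1) / (z - 1)) * ξ) * f ξ)) =
      -(∫ ξ in Ioi (0:ℝ),
        Complex.exp (-(s₀ * (z + 1) / (z - 1)) * ξ) * ((ξ:ℂ) * f ξ)) := by
    rw [← integral_neg]
    refine integral_congr_ae (Filter.Eventually.of_forall fun ξ => ?_)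
    ring
  rw [hJ]
  set I := ∫ ξ in Ioi (0:ℝ),
    Complex.exp (-(s₀ * (z + 1) / (z - 1)) * ξ) * ((ξ:ℂ) * f ξ) with hI
  set L₀ := ∫ ξ in Ioi (0:ℝ),
    Complex.exp (-(s₀ * (z + 1) / (z - 1)) * ξ) * f ξ with hL₀
  have hD : ((-I) * ((s₀ * (z - 1) - s₀ * (z + 1) * 1) / (z - 1) ^ 2) * (z - 1) -
      L₀ * 1) / (z - 1) ^ 2 = (2 * s₀ * I - (z - 1) * L₀) / (z - 1) ^ 3 := by
    rw [div_eq_div_iff (pow_ne_zero 2 hz1') (pow_ne_zero 3 hz1')]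
    field_simp
    ring
  rw [hD]
  have h2 : (z - 1) ^ 2 / 2 * ((2 * s₀ * I - (z - 1) * L₀) / (z - 1) ^ 3) =
      (2 * s₀ * I - (z - 1) * L₀) / (2 * (z - 1)) := by
    rw [div_mul_div_comm, div_eq_div_iff (by simp [hz1'] : (2:ℂ) * (z-1)^3 ≠ 0)
      (by simp [hz1'] : (2:ℂ) * (z - 1) ≠ 0)]
    ring
  have h3 : (z - 1) / 2 * (L₀ / (z - 1)) = L₀ / 2 := by
    rw [div_mul_div_comm, div_eq_div_iff (by simp [hz1'] : (2:ℂ) * (z-1) ≠ 0)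
      (two_ne_zero)]
    ring
  rw [h2, h3]
  rw [div_add_div _ _ (by simp [hz1'] : (2:ℂ) * (z - 1) ≠ 0) (two_ne_zero),
    inv_mul_eq_div, div_div,
    div_eq_div_iff hz1' (by simp [hz1', hs₀] : (2:ℂ) * (z - 1) * 2 * s₀ ≠ 0)]
  ring
end

section
/- Let s₀, a ∈ ℂ with s₀ ≠ 0 and a ≠ s₀. For z in the open unit disc with s₀(z+1)/(z−1) ≠ a, the Möbius-transformed Laplace transform of the exponential mode ξ ↦ e^{aξ}, namely (𝓜𝓛(e^{a·}))(z) = (1/( s₀(z+1)/(z−1) − a ))·(1/(z−1)), equals 1/((s₀ − a)·z + (s₀ + a)); its unique pole is at z_a = (a + s₀)/(a − s₀), and |z_a| < 1 holds if and only if Re(a/s₀) < 0. Consequently, z ↦ 1/((s₀ − a)z + (s₀ + a)) is holomorphic on the open unit disc if and only if Re(a/s₀) ≥ 0. -/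
open Complex Metric

/-- Pole condition for the exponential mode `ξ ↦ e^{aξ}`: its Möbius-transformed Laplace
transform equals `1/((s₀−a)z + (s₀+a))`, whose unique pole `z_a = (a+s₀)/(a−s₀)` lies in
the open unit disc iff `Re(a/s₀) < 0`; consequently it is holomorphic on the disc iff
`Re(a/s₀) ≥ 0`. -/
theorem pole_condition_exponential_mode
    (s₀ a : ℂ) (hs₀ : s₀ ≠ 0) (ha : a ≠ s₀) :
    (∀ z : ℂ, ‖z‖ < 1 → s₀ * (z + 1) / (z - 1) ≠ a →
      1 / (s₀ * (z + 1) / (z - 1) - a) * (1 / (z - 1)) =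
        1 / ((s₀ - a) * z + (s₀ + a))) ∧
    (∀ z : ℂ, (s₀ - a) * z + (s₀ + a) = 0 ↔ z = (a + s₀) / (a - s₀)) ∧
    (‖(a + s₀) / (a - s₀)‖ < 1 ↔ (a / s₀).re < 0) ∧
    (DifferentiableOn ℂ (fun z : ℂ => 1 / ((s₀ - a) * z + (s₀ + a)))
        (ball (0 : ℂ) 1) ↔ 0 ≤ (a / s₀).re) := by
  have hsa : s₀ - a ≠ 0 := sub_ne_zero.mpr (Ne.symm ha)
  have has : a - s₀ ≠ 0 := sub_ne_zero.mpr ha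
  -- part 2
  have h2 : ∀ z : ℂ, (s₀ - a) * z + (s₀ + a) = 0 ↔ z = (a + s₀) / (a - s₀) := by
    intro z
    rw [eq_div_iff has]
    constructor
    · intro h; linear_combination -h
    · intro h; linear_combination -h
  -- part 3
  have h3 : ‖(a + s₀) / (a - s₀)‖ < 1 ↔ (a / s₀).re < 0 := by
    rw [norm_div, div_lt_one (norm_pos_iff.mpr has)]
    have hns : 0 < Complex.normSq s₀ := Complex.normSq_pos.mpr hs₀
    rw [Complex.norm_def, Complex.norm_def,
      Real.sqrt_lt_sqrt_iff (Complex.normSq_nonneg _)]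
    have hkey : Complex.normSq (a + s₀) < Complex.normSq (a - s₀) ↔
        a.re * s₀.re + a.im * s₀.im < 0 := by
      simp only [Complex.normSq_apply, Complex.add_re, Complex.add_im, Complex.sub_re,
        Complex.sub_im]
      constructor <;> intro h <;> nlinarith
    have hkey2 : (a / s₀).re < 0 ↔ a.re * s₀.re + a.im * s₀.im < 0 := by
      rw [Complex.div_re, ← add_div, div_neg_iff]
      constructor
      · rintro (⟨_, h⟩ | ⟨h, _⟩)
        · linarith
        · exact h
      · intro h; right; exact ⟨h, hns⟩
    rw [hkey, hkey2]
  constructor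
  · intro z hz hne
    have hz1 : z - 1 ≠ 0 := by
      intro h
      rw [sub_eq_zero] at h
      simp [h] at hz
    have hden : (s₀ - a) * z + (s₀ + a) ≠ 0 := by
      intro h
      apply hne
      field_simp
      linear_combination h
    have key : s₀ * (z + 1) / (z - 1) - a = ((s₀ - a) * z + (s₀ + a)) / (z - 1) := by
      field_simp
      ring
    rw [key, one_div_div]
    field_simp
  refine ⟨h2, h3, ?_⟩
  constructor
  · intro hd
    by_contra hlt
    push_neg at hlt
    have hmem : (a + s₀) / (a - s₀) ∈ ball (0 : ℂ) 1 := by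
      simpa [mem_ball, dist_eq_norm] using h3.mpr hlt
    set za := (a + s₀) / (a - s₀) with hza
    have hc : ContinuousAt (fun z : ℂ => 1 / ((s₀ - a) * z + (s₀ + a))) za :=
      (hd.continuousOn.continuousWithinAt hmem).continuousAt
        (isOpen_ball.mem_nhds hmem)
    have hval : (s₀ - a) * za + (s₀ + a) = 0 := (h2 za).mpr rfl
    have hlim : Filter.Tendsto
        (fun z : ℂ => (1 / ((s₀ - a) * z + (s₀ + a))) * ((s₀ - a) * z + (s₀ + a)))
        (nhdsWithin za {za}ᶜ) (nhds 0) := by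
      have : Filter.Tendsto (fun z : ℂ => (s₀ - a) * z + (s₀ + a)) (nhds za) (nhds 0) := by
        rw [← hval]
        exact (continuous_const.mul continuous_id).add continuous_const |>.tendsto za
      have := (hc.tendsto.mul this)
      rw [mul_zero] at this
      simp [hval] at this ⊢
      exact this.mono_left nhdsWithin_le_nhds
    have heq : ∀ z ∈ ({za}ᶜ : Set ℂ),
        (1 / ((s₀ - a) * z + (s₀ + a))) * ((s₀ - a) * z + (s₀ + a)) = 1 := by
      intro z hzne
      have : (s₀ - a) * z + (s₀ + a) ≠ 0 := fun h => hzne ((h2 z).mp h)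
      field_simp
    have hlim1 : Filter.Tendsto
        (fun z : ℂ => (1 / ((s₀ - a) * z + (s₀ + a))) * ((s₀ - a) * z + (s₀ + a)))
        (nhdsWithin za {za}ᶜ) (nhds 1) := by
      refine Filter.Tendsto.congr' ?_ tendsto_const_nhds
      filter_upwards [self_mem_nhdsWithin] with z hzne
      exact (heq z hzne).symm
    have : (0 : ℂ) = 1 := tendsto_nhds_unique hlim hlim1
    simp at this
  · intro hre
    intro z hz
    have hden : (s₀ - a) * z + (s₀ + a) ≠ 0 := by
      intro h
      have hzeq := (h2 z).mp h
      rw [mem_ball, dist_eq_norm, sub_zero] at hz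
      rw [hzeq] at hz
      exact absurd (h3.mp hz) (not_lt.mpr hre)
    have hdiff : DifferentiableAt ℂ (fun z : ℂ => (s₀ - a) * z + (s₀ + a)) z := by fun_prop
    exact ((differentiableAt_const 1).div hdiff hden).differentiableWithinAt
end
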